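/- Let K be a compact convex subset of a locally convex real topological vector space. The map k ↦ δ_k (point evaluation) is an affine homeomorphism from K onto the state space S = {Λ ∈ A(K)* : ‖Λ‖ ≤ 1, Λ(1) = 1} equipped with the weak* topology. -/

import Mathlib

open NormedSpace ContinuousMap

/-- A continuous function on `K` is affine if it preserves convex combinations. -/
def IsAffineOn {E : Type*} [AddCommGroup E] [Module ℝ E] [TopologicalSpace E]
    (K : Set E) (a : C(K, ℝ)) : Prop :=
  ∀ (x y : K) (t : ℝ), 0 ≤ t → t ≤ 1 →
    ∀ h : t • (x : E) + (1 - t) • (y : E) ∈ K,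
      a ⟨t • (x : E) + (1 - t) • (y : E), h⟩ = t * a x + (1 - t) * a y

/-- `A(K)`, the affine continuous real functions on `K`, as a subspace of `C(K, ℝ)`. -/
def affineFns {E : Type*} [AddCommGroup E] [Module ℝ E] [TopologicalSpace E]
    (K : Set E) : Submodule ℝ C(K, ℝ) where
  carrier := {a | IsAffineOn K a}
  add_mem' := by
    intro a b ha hb x y t ht ht' h
    simp only [ContinuousMap.add_apply, ha x y t ht ht' h, hb x y t ht ht' h]; ring
  zero_mem' := by intro x y t ht ht' h; simp
  smul_mem' := by
    intro c a ha x y t ht ht' h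
    simp only [ContinuousMap.smul_apply, ha x y t ht ht' h, smul_eq_mul]; ring

theorem one_mem_affineFns {E : Type*} [AddCommGroup E] [Module ℝ E] [TopologicalSpace E]
    (K : Set E) : (1 : C(K, ℝ)) ∈ affineFns K := by
  intro x y t ht ht' h
  simp only [ContinuousMap.one_apply]; ring


/-- Evaluation at a point of `K`, as a continuous linear functional on `A(K)`. -/
noncomputable def evalA {E : Type*} [AddCommGroup E] [Module ℝ E] [TopologicalSpace E]
    (K : Set E) [CompactSpace K] (k : K) : StrongDual ℝ (affineFns K) :=
  LinearMap.mkContinuous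
    { toFun := fun a => (a : C(K, ℝ)) k
      map_add' := fun _ _ => rfl
      map_smul' := fun _ _ => rfl }
    1 (fun a => by simpa using (a : C(K, ℝ)).norm_coe_le_norm k)

/-- Every continuous linear functional on the weak-* dual is evaluation at a point. -/
lemma weakDual_dual_eval {F : Type*} [NormedAddCommGroup F] [NormedSpace ℝ F]
    (f : WeakDual ℝ F →L[ℝ] ℝ) : ∃ a : F, ∀ Λ : WeakDual ℝ F, f Λ = Λ a := by
  classical
  set B := topDualPairing ℝ F with hB
  have hb := LinearMap.hasBasis_weakBilin B
  have h0 : f ⁻¹' Metric.ball 0 1 ∈ nhds (0 : WeakDual ℝ F) := by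
    have := f.continuous.continuousAt (x := 0)
    have hball : Metric.ball (0 : ℝ) 1 ∈ nhds (f 0) := by
      rw [map_zero]; exact Metric.ball_mem_nhds 0 one_pos
    exact this.preimage_mem_nhds hball
  replace h0 := hb.mem_iff.mp h0
  obtain ⟨U, hU, hUsub⟩ := h0
  obtain ⟨s, r, hr, rfl⟩ := (SeminormFamily.basisSets_iff _).mp hU
  let T : F →ₗ[ℝ] (WeakDual ℝ F) →ₗ[ℝ] ℝ :=
    { toFun := fun a =>
        { toFun := fun Λ => Λ a
          map_add' := fun Λ μ => rfl
          map_smul' := fun c Λ => rfl }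
      map_add' := fun a b => by ext Λ; exact map_add Λ a b
      map_smul' := fun c a => by ext Λ; exact map_smul Λ c a }
  have key : ⨅ i : s, LinearMap.ker (T (i : F)) ≤ LinearMap.ker (f : WeakDual ℝ F →ₗ[ℝ] ℝ) := by
    intro Λ hΛ
    simp only [Submodule.mem_iInf, LinearMap.mem_ker] at hΛ ⊢
    have hzero : ∀ a ∈ s, Λ a = 0 := fun a ha => hΛ ⟨a, ha⟩
    by_contra hne
    have hball : ∀ c : ℝ,
        c • @id (WeakBilin B) Λ ∈ (id (Seminorm.ball (s.sup (LinearMap.toSeminormFamily B)) 0 r) : Set (WeakBilin B)) := by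
      intro c
      simp only [id]
      rw [Seminorm.mem_ball_zero]
      apply Seminorm.finset_sup_apply_lt hr
      intro a ha
      show ‖c * Λ a‖ < r
      rw [hzero a ha, mul_zero, norm_zero]
      exact hr
    have h2 : f ((2 / |f Λ|) • Λ) ∈ Metric.ball (0 : ℝ) 1 := hUsub (hball (2 / |f Λ|))
    simp only [Set.mem_preimage, Metric.mem_ball, dist_zero_right, Real.norm_eq_abs] at h2
    have hfc : f ((2 / |f Λ|) • Λ) = (2 / |f Λ|) * f Λ := map_smul f _ _
    rw [hfc, abs_mul, abs_div, abs_abs, abs_two, div_mul_cancel₀] at h2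
    · linarith
    · exact abs_ne_zero.mpr hne
  have hspan := mem_span_of_iInf_ker_le_ker (𝕜 := ℝ) key
  have hsub : Submodule.span ℝ (Set.range fun i : s => T (i : F)) ≤ LinearMap.range T := by
    rw [Submodule.span_le]
    rintro _ ⟨i, rfl⟩
    exact ⟨(i : F), rfl⟩
  obtain ⟨a, ha⟩ := hsub hspan
  exact ⟨a, fun Λ => (LinearMap.congr_fun ha Λ).symm⟩

set_option maxHeartbeats 1000000 in

set_option maxHeartbeats 1000000 in
/-- The evaluation map `k ↦ δ_k` is an affine homeomorphism from `K` onto the state space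
`S = {Λ ∈ A(K)* : ‖Λ‖ ≤ 1, Λ(1) = 1}` equipped with the weak* topology. -/
theorem stmt_10 {E : Type*} [AddCommGroup E] [Module ℝ E] [TopologicalSpace E]
    [IsTopologicalAddGroup E] [ContinuousSMul ℝ E] [T2Space E] [LocallyConvexSpace ℝ E]
    (K : Set E) [CompactSpace K] (hK : Convex ℝ K)
    (S : Set (StrongDual ℝ (affineFns K)))
    (hS : S = {Λ : StrongDual ℝ (affineFns K) |
      @Norm.norm _ (@ContinuousLinearMap.hasOpNorm ℝ ℝ (affineFns K) ℝ _ _ _ _ _ _ (RingHom.id ℝ)) Λ ≤ 1 ∧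
      Λ ⟨(1 : C(K, ℝ)), one_mem_affineFns K⟩ = 1}) :
    ∃ φ : K ≃ₜ (StrongDual.toWeakDual '' S : Set (WeakDual ℝ (affineFns K))),
      (∀ k : K, (φ k : WeakDual ℝ (affineFns K)) = StrongDual.toWeakDual (evalA K k)) ∧
      -- the map is affine
      (∀ (x y : K) (t : ℝ), 0 ≤ t → t ≤ 1 →
        ∀ h : t • (x : E) + (1 - t) • (y : E) ∈ K,
          (φ ⟨t • (x : E) + (1 - t) • (y : E), h⟩ : WeakDual ℝ (affineFns K)) =
            t • (φ x : WeakDual ℝ (affineFns K)) +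
              (1 - t) • (φ y : WeakDual ℝ (affineFns K))) := by

  classical
  subst hS
  set oneF : affineFns K := ⟨(1 : C(K, ℝ)), one_mem_affineFns K⟩ with honeF
  let e : K → WeakDual ℝ (affineFns K) := fun k => StrongDual.toWeakDual (evalA K k)
  have he_apply : ∀ (k : K) (a : affineFns K), e k a = (a : C(K, ℝ)) k := fun _ _ => rfl
  have he_cont : Continuous e :=
    WeakDual.continuous_of_continuous_eval (fun a => (a : C(K, ℝ)).continuous)
  have he_aff : ∀ (x y : K) (t : ℝ), 0 ≤ t → t ≤ 1 →
      ∀ h : t • (x : E) + (1 - t) • (y : E) ∈ K,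
      e ⟨t • (x : E) + (1 - t) • (y : E), h⟩ = t • e x + (1 - t) • e y := by
    intro x y t ht ht' h
    apply DFunLike.ext
    intro a
    show (a : C(K, ℝ)) ⟨t • (x : E) + (1 - t) • (y : E), h⟩
        = t * (a : C(K, ℝ)) x + (1 - t) * (a : C(K, ℝ)) y
    exact a.2 x y t ht ht' h
  have he_inj : Function.Injective e := by
    intro x y hxy
    by_contra hne
    have hne' : (x : E) ≠ (y : E) := fun h => hne (Subtype.ext h)
    obtain ⟨g, hg⟩ := SeparatingDual.exists_separating_of_ne (R := ℝ) hne'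
    let ag : C(K, ℝ) := ⟨fun k => g k, g.continuous.comp continuous_subtype_val⟩
    have hag : ag ∈ affineFns K := by
      intro p q t ht ht' h
      show g (t • (p : E) + (1 - t) • (q : E)) = t * g p + (1 - t) * g q
      simp [map_add, map_smul, smul_eq_mul]
    have := congrArg (fun Λ : WeakDual ℝ (affineFns K) => Λ ⟨ag, hag⟩) hxy
    exact hg this
  have hmem : ∀ k : K,
      e k ∈ StrongDual.toWeakDual '' {Λ : StrongDual ℝ (affineFns K) | @Norm.norm _ (@ContinuousLinearMap.hasOpNorm ℝ ℝ (affineFns K) ℝ _ _ _ _ _ _ (RingHom.id ℝ)) Λ ≤ 1 ∧ Λ oneF = 1} := by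
    intro k
    refine ⟨evalA K k, ⟨?_, ?_⟩, rfl⟩
    · exact LinearMap.mkContinuous_norm_le _ zero_le_one _
    · rfl
  have hsurj : ∀ Λ : StrongDual ℝ (affineFns K), @Norm.norm _ (@ContinuousLinearMap.hasOpNorm ℝ ℝ (affineFns K) ℝ _ _ _ _ _ _ (RingHom.id ℝ)) Λ ≤ 1 → Λ oneF = 1 →
      ∃ k, e k = StrongDual.toWeakDual Λ := by
    intro Λ hnorm hone
    have hneK : Nonempty K := by
      by_contra hempty
      rw [not_nonempty_iff] at hempty
      have h10 : oneF = 0 := by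
        apply Subtype.ext
        apply ContinuousMap.ext
        intro x
        exact (hempty.false x).elim
      rw [h10, map_zero] at hone
      exact one_ne_zero hone.symm
    haveI : LocallyConvexSpace ℝ (WeakDual ℝ (affineFns K)) := by
      have hlc : ∀ (F : Type _) [NormedAddCommGroup F] [NormedSpace ℝ F], LocallyConvexSpace ℝ (WeakDual ℝ F) :=
        fun F _ _ => inferInstanceAs (LocallyConvexSpace ℝ (WeakBilin (topDualPairing ℝ F)))
      exact hlc (affineFns K)
    set T : Set (WeakDual ℝ (affineFns K)) := Set.range e with hT
    have hTcomp : IsCompact T := isCompact_range he_cont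
    have hTclosed : IsClosed T := hTcomp.isClosed
    have hTconvex : Convex ℝ T := by
      rintro _ ⟨x, rfl⟩ _ ⟨y, rfl⟩ s t hs ht hst
      have h1 : t = 1 - s := by linarith
      subst h1
      have hmem' : s • (x : E) + (1 - s) • (y : E) ∈ K := hK x.2 y.2 hs ht hst
      exact ⟨⟨_, hmem'⟩, (he_aff x y s hs (by linarith) hmem').symm ▸ rfl⟩
    by_contra hno
    push_neg at hno
    have hΛnot : StrongDual.toWeakDual Λ ∉ T := by
      rintro ⟨k, hk⟩; exact hno k hk
    obtain ⟨f, u, hfT, hfΛ⟩ := geometric_hahn_banach_closed_point hTconvex hTclosed hΛnot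
    obtain ⟨a, hfa⟩ := weakDual_dual_eval (F := affineFns K) f
    have hlt : ∀ k : K, (a : C(K, ℝ)) k < u := by
      intro k
      have := hfT (e k) ⟨k, rfl⟩
      rwa [hfa] at this
    have hu : u < Λ a := by
      have := hfΛ
      rwa [hfa] at this
    obtain ⟨k₀, -, hk₀'⟩ := IsCompact.exists_isMinOn isCompact_univ Set.univ_nonempty
      ((a : C(K, ℝ)).continuous.continuousOn (s := Set.univ))
    have hk₀ : ∀ k : K, (a : C(K, ℝ)) k₀ ≤ (a : C(K, ℝ)) k := fun k =>
      isMinOn_iff.mp hk₀' k (Set.mem_univ k)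
    set m := (a : C(K, ℝ)) k₀ with hm
    have hmu : m < u := hlt k₀
    set b : affineFns K := a - ((u + m) / 2) • oneF with hb
    have hbval : ∀ k : K, (b : C(K, ℝ)) k = (a : C(K, ℝ)) k - (u + m) / 2 := by
      intro k; simp [hb, honeF]
    have hbnorm : ‖b‖ ≤ (u - m) / 2 := by
      show ‖(b : C(K, ℝ))‖ ≤ (u - m) / 2
      rw [ContinuousMap.norm_le _ (by linarith)]
      intro k
      rw [hbval, Real.norm_eq_abs, abs_le]
      constructor
      · have := hk₀ k; linarith
      · have := (hlt k).le; linarith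
    have hΛb : Λ b = Λ a - (u + m) / 2 := by
      rw [hb, map_sub, map_smul, hone, smul_eq_mul, mul_one]
    have habs : Λ b ≤ (u - m) / 2 := by
      calc Λ b ≤ ‖Λ b‖ := le_abs_self _
        _ ≤ @Norm.norm _ (@ContinuousLinearMap.hasOpNorm ℝ ℝ (affineFns K) ℝ _ _ _ _ _ _ (RingHom.id ℝ)) Λ * ‖b‖ := @ContinuousLinearMap.le_opNorm ℝ ℝ (affineFns K) ℝ _ _ _ _ _ _ (RingHom.id ℝ) _ Λ b
        _ ≤ 1 * ((u - m) / 2) := mul_le_mul hnorm hbnorm (norm_nonneg _) zero_le_one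
        _ = (u - m) / 2 := one_mul _
    rw [hΛb] at habs
    linarith
  have hrange : Set.range e
      = StrongDual.toWeakDual '' {Λ : StrongDual ℝ (affineFns K) | @Norm.norm _ (@ContinuousLinearMap.hasOpNorm ℝ ℝ (affineFns K) ℝ _ _ _ _ _ _ (RingHom.id ℝ)) Λ ≤ 1 ∧ Λ oneF = 1} := by
    apply Set.Subset.antisymm
    · rintro _ ⟨k, rfl⟩; exact hmem k
    · rintro _ ⟨Λ, ⟨h1, h2⟩, rfl⟩
      obtain ⟨k, hk⟩ := hsurj Λ h1 h2
      exact ⟨k, hk⟩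
  let e' : K → ↥(StrongDual.toWeakDual ''
      {Λ : StrongDual ℝ (affineFns K) | @Norm.norm _ (@ContinuousLinearMap.hasOpNorm ℝ ℝ (affineFns K) ℝ _ _ _ _ _ _ (RingHom.id ℝ)) Λ ≤ 1 ∧ Λ oneF = 1}) := fun k => ⟨e k, hmem k⟩
  have hbij : Function.Bijective e' := by
    constructor
    · intro x y hxy
      exact he_inj (congrArg Subtype.val hxy)
    · rintro ⟨Λ', hΛ'⟩
      rw [← hrange] at hΛ'
      obtain ⟨k, hk⟩ := hΛ'
      exact ⟨k, Subtype.ext hk⟩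
  have hcont' : Continuous e' := he_cont.subtype_mk _
  let φ := Continuous.homeoOfEquivCompactToT2 (f := Equiv.ofBijective e' hbij) hcont'
  refine ⟨φ, fun k => rfl, ?_⟩
  intro x y t ht ht' h
  exact he_aff x y t ht ht' h
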